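/- Let f : ℂ^n → ℂ be a function and let Γ(f) = {(x, f(x)) : x ∈ ℂ^n} ⊆ ℂ^{n+1} be its graph. Then the following are equivalent: (a) f is continuous and rational; (b) f is continuous and every point (x,w) ∈ ℂ^{n+1} at which all complex polynomials in n+1 variables vanishing identically on Γ(f) vanish satisfies w = f(x) (i.e., Γ(f) equals the set of complex points of its Zariski closure). (Proposition 9.7 in the case of affine n-space.) -/

import Mathlib

open MvPolynomial

noncomputable section


private lemma aeval_line {n : ℕ} (q : MvPolynomial (Fin n) ℂ) (c v : Fin n → ℂ) (t : ℂ) :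
    Polynomial.eval t
      (MvPolynomial.aeval (fun i => Polynomial.C (c i) + Polynomial.C (v i) * Polynomial.X) q)
      = eval (fun i => c i + v i * t) q := by
  induction q using MvPolynomial.induction_on with
  | C a => simp
  | add p q hp hq => simp [hp, hq]
  | mul_X p i hp => simp [hp]

private lemma dense_nonzero {n : ℕ} {q : MvPolynomial (Fin n) ℂ} (hq : q ≠ 0) :
    Dense {x : Fin n → ℂ | eval x q ≠ 0} := by
  rw [Metric.dense_iff]
  intro x r hr
  obtain ⟨u, hu⟩ : ∃ u, eval u q ≠ 0 := by
    by_contra h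
    push_neg at h
    exact hq (MvPolynomial.funext fun v => by simp [h v])
  set φ : Polynomial ℂ :=
    MvPolynomial.aeval (fun i => Polynomial.C (x i) + Polynomial.C (u i - x i) * Polynomial.X) q
    with hφdef
  have hφ1 : Polynomial.eval 1 φ = eval u q := by
    rw [hφdef, aeval_line]
    have : (fun i => x i + (u i - x i) * 1) = u := by funext i; ring
    rw [this]
  have hφ : φ ≠ 0 := by
    intro h; rw [h, Polynomial.eval_zero] at hφ1; exact hu hφ1.symm
  have hfin : Set.Finite {t : ℂ | φ.IsRoot t} := Polynomial.finite_setOf_isRoot hφ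
  set M : ℝ := dist u x + 1 with hM
  have hM0 : 0 < M := by positivity
  have hδ : 0 < r / M := by positivity
  have hinf : (Metric.ball (0:ℂ) (r / M)).Infinite := by
    apply Set.infinite_of_injective_forall_mem
      (f := fun k : ℕ => (((r / M) / (k + 2) : ℝ) : ℂ))
    case hi =>
      intro a b hab
      rw [Complex.ofReal_inj] at hab
      have ha : (0:ℝ) < a + 2 := by positivity
      have hb : (0:ℝ) < b + 2 := by positivity
      rw [div_eq_div_iff ha.ne' hb.ne'] at hab
      have h2 := mul_left_cancel₀ (ne_of_gt hδ) (by linarith : (r/M) * ((a:ℝ)+2) = (r/M) * ((b:ℝ)+2))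
      have h3 : (a:ℝ) = b := by linarith
      exact_mod_cast h3
    case hf =>
      intro k
      simp only [Metric.mem_ball, dist_zero_right, Complex.norm_real]
      have hk0 : (0:ℝ) ≤ (k:ℝ) := Nat.cast_nonneg k
      have hk : (1:ℝ) < (k:ℝ) + 2 := by linarith
      rw [Real.norm_eq_abs, abs_of_pos (by positivity)]
      exact div_lt_self hδ hk
  obtain ⟨t, htb, htr⟩ := (hinf.diff hfin).nonempty
  refine ⟨fun i => x i + (u i - x i) * t, ?_, ?_⟩
  · rw [Metric.mem_ball, dist_pi_lt_iff hr]
    intro i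
    have h1 : dist (x i + (u i - x i) * t) (x i) = ‖u i - x i‖ * ‖t‖ := by
      rw [dist_eq_norm, show x i + (u i - x i) * t - x i = (u i - x i) * t by ring, norm_mul]
    rw [h1]
    have h2 : ‖u i - x i‖ < M := by
      have : ‖u i - x i‖ = dist (u i) (x i) := by rw [dist_eq_norm]
      rw [this, hM]
      have := dist_le_pi_dist u x i
      linarith
    have h3 : ‖t‖ < r / M := by
      rw [Metric.mem_ball, dist_zero_right] at htb; exact htb
    calc ‖u i - x i‖ * ‖t‖ < M * (r / M) :=
          mul_lt_mul'' h2 h3 (norm_nonneg _) (norm_nonneg _)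
      _ = r := by field_simp
  · show eval _ q ≠ 0
    intro h
    apply htr
    show Polynomial.eval t φ = 0
    rw [hφdef, aeval_line]
    exact h

private lemma qf_eq_p {n : ℕ} {f : (Fin n → ℂ) → ℂ} (hf : Continuous f)
    {q p : MvPolynomial (Fin n) ℂ} (hq : q ≠ 0)
    (h : ∀ x, eval x q ≠ 0 → eval x q * f x = eval x p) :
    ∀ x, eval x q * f x = eval x p := by
  have hcont1 : Continuous fun x => eval x q * f x :=
    (MvPolynomial.continuous_eval q).mul hf
  have := Continuous.ext_on (dense_nonzero hq) hcont1 (MvPolynomial.continuous_eval p)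
    (fun x hx => h x hx)
  exact fun x => congrFun this x

private lemma poly_of_rat {n : ℕ} {f : (Fin n → ℂ) → ℂ} (hf : Continuous f) :
    ∀ q : MvPolynomial (Fin n) ℂ, q ≠ 0 →
      ∀ p, (∀ x, eval x q * f x = eval x p) →
      ∃ g : MvPolynomial (Fin n) ℂ, ∀ x, f x = eval x g := by
  intro q
  refine wellFounded_dvdNotUnit.induction
    (C := fun q => q ≠ 0 → ∀ p, (∀ x, eval x q * f x = eval x p) →
      ∃ g : MvPolynomial (Fin n) ℂ, ∀ x, f x = eval x g) q ?_
  clear q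
  intro q IH hq p hqp
  by_cases hu : IsUnit q
  · obtain ⟨r, hr1, _⟩ := isUnit_iff_exists.mp hu
    refine ⟨r * p, fun x => ?_⟩
    have h1 : eval x q * eval x r = 1 := by
      rw [← map_mul, hr1, map_one]
    calc f x = (eval x q * eval x r) * f x := by rw [h1, one_mul]
      _ = eval x r * (eval x q * f x) := by ring
      _ = eval x r * eval x p := by rw [hqp x]
      _ = eval x (r * p) := by rw [map_mul]
  · obtain ⟨π, hπirr, q₁, rfl⟩ := WfDvdMonoid.exists_irreducible_factor hu hq
    have hπprime : Prime π := UniqueFactorizationMonoid.irreducible_iff_prime.mp hπirr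
    have hπ0 : π ≠ 0 := hπprime.ne_zero
    have hq₁ : q₁ ≠ 0 := right_ne_zero_of_mul hq
    -- π divides p via the Nullstellensatz
    have hpdvd : π ∣ p := by
      have hmem : p ∈ MvPolynomial.vanishingIdeal ℂ
          (MvPolynomial.zeroLocus ℂ (Ideal.span {π})) := by
        rw [MvPolynomial.mem_vanishingIdeal_iff]
        intro x hx
        change eval x p = 0
        have hπx : eval x π = 0 := by
          simpa [MvPolynomial.coe_aeval_eq_eval] using hx π (Ideal.mem_span_singleton_self π)
        rw [← hqp x, map_mul, hπx, zero_mul, zero_mul]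
      rw [MvPolynomial.vanishingIdeal_zeroLocus_eq_radical,
        ((Ideal.span_singleton_prime hπ0).mpr hπprime).radical] at hmem
      exact Ideal.mem_span_singleton.mp hmem
    obtain ⟨p₁, rfl⟩ := hpdvd
    have hkey : ∀ x, eval x q₁ * f x = eval x p₁ := by
      have hcont1 : Continuous fun x => eval x q₁ * f x :=
        (MvPolynomial.continuous_eval q₁).mul hf
      have heq := Continuous.ext_on (dense_nonzero hπ0) hcont1
        (MvPolynomial.continuous_eval p₁) (fun x hx => by
          have := hqp x
          rw [map_mul, map_mul] at this
          have h2 : eval x π * (eval x q₁ * f x) = eval x π * eval x p₁ := by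
            rw [← this]; ring
          exact mul_left_cancel₀ hx h2)
      exact fun x => congrFun heq x
    exact IH q₁ ⟨hq₁, π, hπirr.not_isUnit, mul_comm π q₁⟩ hq₁ p₁ hkey

private lemma corr {n : ℕ} (P : MvPolynomial (Fin (n+1)) ℂ) (x : Fin n → ℂ) (w : ℂ) :
    Polynomial.eval₂ (MvPolynomial.eval x) w
      (MvPolynomial.optionEquivLeft ℂ (Fin n) (MvPolynomial.rename finSuccEquivLast P))
      = eval (Fin.snoc x w) P := by
  induction P using MvPolynomial.induction_on with
  | C a =>
    simp [optionEquivLeft_C]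
  | add p q hp hq =>
    simp only [map_add, Polynomial.eval₂_add, hp, hq]
  | mul_X p i hp =>
    simp only [map_mul, Polynomial.eval₂_mul, hp, rename_X, eval_mul, eval_X]
    congr 1
    cases i using Fin.lastCases with
    | last =>
      simp [finSuccEquivLast_last, optionEquivLeft_X_none, Fin.snoc_last]
    | cast j =>
      simp [finSuccEquivLast_castSucc, optionEquivLeft_X_some, Fin.snoc_castSucc]

private lemma rat_of_closed {n : ℕ} {f : (Fin n → ℂ) → ℂ}
    (hb : ∀ (x : Fin n → ℂ) (w : ℂ),
      (∀ P : MvPolynomial (Fin (n + 1)) ℂ,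
        (∀ y : Fin n → ℂ, eval (Fin.snoc y (f y)) P = 0) →
        eval (Fin.snoc x w) P = 0) → w = f x) :
    ∃ p q : MvPolynomial (Fin n) ℂ, q ≠ 0 ∧
      ∀ x : Fin n → ℂ, eval x q ≠ 0 → f x = eval x p / eval x q := by
  classical
  set A := Polynomial (MvPolynomial (Fin n) ℂ)
  -- the "vanishing set" of the graph, in Polynomial form
  set J : Set A := {F | ∀ y, Polynomial.eval₂ (MvPolynomial.eval y) (f y) F = 0} with hJ
  -- transported hypothesis
  have hbJ : ∀ (x : Fin n → ℂ) (w : ℂ),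
      (∀ F ∈ J, Polynomial.eval₂ (MvPolynomial.eval x) w F = 0) → w = f x := by
    intro x w h
    apply hb x w
    intro P hP
    rw [← corr]
    exact h _ (fun y => by rw [corr]; exact hP y)
  -- J contains a nonzero element
  have hex : ∃ F ∈ J, F ≠ 0 := by
    by_contra h
    push_neg at h
    have h1 : f 0 + 1 = f 0 := by
      apply hbJ 0 (f 0 + 1)
      intro F hF
      rw [h F hF]
      simp
    simp at h1
  -- minimal degree
  set S : Set ℕ := {k | ∃ F ∈ J, F ≠ 0 ∧ Polynomial.natDegree F = k} with hS
  have hSne : S.Nonempty := by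
    obtain ⟨F, hF, hF0⟩ := hex
    exact ⟨F.natDegree, F, hF, hF0, rfl⟩
  set d := sInf S with hd
  obtain ⟨P₀, hP₀J, hP₀0, hP₀deg⟩ : ∃ F ∈ J, F ≠ 0 ∧ Polynomial.natDegree F = d :=
    Nat.sInf_mem hSne
  have hmin : ∀ F ∈ J, F ≠ 0 → d ≤ F.natDegree :=
    fun F hF h0 => Nat.sInf_le ⟨F, hF, h0, rfl⟩
  have hd1 : 1 ≤ d := by
    by_contra h
    push_neg at h
    interval_cases d
    · obtain ⟨a, ha⟩ := Polynomial.natDegree_eq_zero.mp hP₀deg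
      have ha0 : a = 0 := by
        apply MvPolynomial.funext (q := 0)
        intro y
        have := hP₀J y
        rw [← ha, Polynomial.eval₂_C] at this
        simpa using this
      exact hP₀0 (by rw [← ha, ha0, map_zero])
  set c := P₀.coeff d with hc
  have hlc : P₀.leadingCoeff = c := by rw [Polynomial.leadingCoeff, hP₀deg]
  have hc0 : c ≠ 0 := by
    rw [← hlc]
    exact Polynomial.leadingCoeff_ne_zero.mpr hP₀0
  -- Claim B: bounded-degree vanishing at any root of P₀ over a point where c ≠ 0
  have claimB : ∀ (x : Fin n → ℂ), eval x c ≠ 0 →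
      ∀ w : ℂ, Polynomial.eval₂ (MvPolynomial.eval x) w P₀ = 0 →
      ∀ (e : ℕ) (F : A), F ∈ J → Polynomial.natDegree F ≤ e →
        Polynomial.eval₂ (MvPolynomial.eval x) w F = 0 := by
    intro x hx w hw e
    induction e using Nat.strong_induction_on with
    | _ e IH =>
      intro F hF hFe
      rcases eq_or_ne F 0 with rfl | hF0
      · simp
      rcases lt_or_eq_of_le hFe with hlt | heq
      · rcases Nat.lt_or_ge 0 e with he | he
        · exact IH F.natDegree hlt F hF le_rfl
        · omega
      have hde : d ≤ e := heq ▸ hmin F hF hF0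
      set G : A := Polynomial.C c * F -
        Polynomial.C F.leadingCoeff * Polynomial.X ^ (e - d) * P₀ with hG
      have hGJ : G ∈ J := by
        intro y
        have h1 := hF y
        have h2 := hP₀J y
        show Polynomial.eval₂ (MvPolynomial.eval y) (f y) G = 0
        rw [hG, Polynomial.eval₂_sub, Polynomial.eval₂_mul, Polynomial.eval₂_mul, h1, h2,
          mul_zero, mul_zero, sub_zero]
      have hGdeg : G.natDegree ≤ e := by
        apply le_trans (Polynomial.natDegree_sub_le _ _)
        apply max_le
        · exact le_trans (Polynomial.natDegree_C_mul_le _ _) heq.le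
        · apply le_trans (Polynomial.natDegree_mul_le)
          have h3 : (Polynomial.C F.leadingCoeff * Polynomial.X ^ (e - d) : A).natDegree ≤ e - d := by
            apply le_trans (Polynomial.natDegree_C_mul_le _ _)
            exact (Polynomial.natDegree_X_pow _).le
          have := hP₀deg
          omega
      have hGe : G.coeff e = 0 := by
        rw [hG, Polynomial.coeff_sub, Polynomial.coeff_C_mul, mul_assoc]
        rw [Polynomial.coeff_C_mul]
        have hXP : (Polynomial.X ^ (e - d) * P₀ : A).coeff e = P₀.coeff d := by
          have h4 := Polynomial.coeff_X_pow_mul P₀ (e - d) d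
          rwa [show d + (e - d) = e by omega] at h4
        have h5 : F.coeff e = F.leadingCoeff := by rw [Polynomial.leadingCoeff, heq]
        rw [hXP, h5, ← hc]
        ring
      have hEG : Polynomial.eval₂ (MvPolynomial.eval x) w G = 0 := by
        rcases eq_or_ne G 0 with h | h
        · rw [h]; simp
        · have : G.natDegree < e := by
            rcases lt_or_eq_of_le hGdeg with h' | h'
            · exact h'
            · exfalso
              have h6 : G.leadingCoeff = 0 := by
                rw [Polynomial.leadingCoeff, h', hGe]
              exact h (Polynomial.leadingCoeff_eq_zero.mp h6)
          exact IH G.natDegree this G hGJ le_rfl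
      have h7 : Polynomial.C c * F =
          G + Polynomial.C F.leadingCoeff * Polynomial.X ^ (e - d) * P₀ := by
        rw [hG]; ring
      have h6 := congrArg (Polynomial.eval₂ (MvPolynomial.eval x) w) h7
      rw [Polynomial.eval₂_mul, Polynomial.eval₂_C, Polynomial.eval₂_add, hEG,
        Polynomial.eval₂_mul, hw, mul_zero, zero_add] at h6
      exact (mul_eq_zero.mp h6).resolve_left hx
  refine ⟨-(P₀.coeff (d - 1)), MvPolynomial.C (d : ℂ) * c, ?_, ?_⟩
  · refine mul_ne_zero (fun h => ?_) hc0
    have h2 : (d : ℂ) = 0 := by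
      have h3 := congrArg (eval (0 : Fin n → ℂ)) h
      simpa using h3
    rw [Nat.cast_eq_zero] at h2
    omega
  · intro x hxq
    rw [map_mul, eval_C] at hxq
    have hxc : eval x c ≠ 0 := fun h => hxq (by rw [h, mul_zero])
    have hxd : (d : ℂ) ≠ 0 := fun h => hxq (by rw [h, zero_mul])
    set px : Polynomial ℂ := P₀.map (MvPolynomial.eval x) with hpx
    have hpxc : px.coeff d = eval x c := by rw [hpx, Polynomial.coeff_map, hc]
    have hpx0 : px ≠ 0 := fun h => hxc (by rw [← hpxc, h, Polynomial.coeff_zero])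
    have hpxdeg : px.natDegree = d := by
      rw [hpx, Polynomial.natDegree_map_of_leadingCoeff_ne_zero _ (by rw [hlc]; exact hxc),
        hP₀deg]
    have hpxlc : px.leadingCoeff = eval x c := by
      rw [Polynomial.leadingCoeff, hpxdeg, hpxc]
    have hsplit : px.Splits := IsAlgClosed.splits px
    have hcard : px.roots.card = d := by
      rw [Polynomial.splits_iff_card_roots.mp hsplit, hpxdeg]
    have hroots : ∀ z ∈ px.roots, z = f x := by
      intro z hz
      have hz0 : Polynomial.eval₂ (MvPolynomial.eval x) z P₀ = 0 := by
        rw [← Polynomial.eval_map, ← hpx]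
        exact (Polynomial.mem_roots'.mp hz).2
      exact hbJ x z (fun F hF => claimB x hxc z hz0 F.natDegree F hF le_rfl)
    have hrep : px.roots = Multiset.replicate d (f x) :=
      Multiset.eq_replicate.mpr ⟨hcard, hroots⟩
    have hprod : px = Polynomial.C (eval x c) *
        (Polynomial.X - Polynomial.C (f x)) ^ d := by
      have h1 := hsplit.eq_prod_roots
      rw [hrep, Multiset.map_replicate, Multiset.prod_replicate, hpxlc] at h1
      exact h1
    -- compare coefficients at d - 1
    have hcoeff := congrArg (fun P : Polynomial ℂ => P.coeff (d - 1)) hprod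
    rw [hpx] at hcoeff  -- maybe noop
    have hL : (P₀.map (MvPolynomial.eval x)).coeff (d - 1) = eval x (P₀.coeff (d - 1)) :=
      Polynomial.coeff_map _ _
    have hR : (Polynomial.C (eval x c) *
        (Polynomial.X - Polynomial.C (f x)) ^ d).coeff (d - 1)
        = eval x c * (-(f x) * d) := by
      rw [Polynomial.coeff_C_mul]
      rw [show (Polynomial.X - Polynomial.C (f x) : Polynomial ℂ)
          = Polynomial.X + Polynomial.C (-(f x)) by rw [Polynomial.C_neg]; ring]
      rw [Polynomial.coeff_X_add_C_pow]
      rw [show d - (d - 1) = 1 by omega, pow_one]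
      rw [show d.choose (d - 1) = d by
        rw [← Nat.choose_symm (by omega : d - 1 ≤ d), show d - (d - 1) = 1 by omega,
          Nat.choose_one_right]]
      try ring
    rw [hL, hR] at hcoeff
    -- hcoeff : eval x (P₀.coeff (d-1)) = eval x c * (-(f x) * d)
    rw [map_neg, map_mul, eval_C]
    rw [eq_div_iff hxq]
    rw [hcoeff]
    ring

end

theorem continuous_rational_iff_graph_zariski_closed_complex
    (n : ℕ) (f : (Fin n → ℂ) → ℂ) :
    (Continuous f ∧ ∃ p q : MvPolynomial (Fin n) ℂ, q ≠ 0 ∧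
      ∀ x : Fin n → ℂ, eval x q ≠ 0 → f x = eval x p / eval x q) ↔
    (Continuous f ∧ ∀ (x : Fin n → ℂ) (w : ℂ),
      (∀ P : MvPolynomial (Fin (n + 1)) ℂ,
        (∀ y : Fin n → ℂ, eval (Fin.snoc y (f y)) P = 0) →
        eval (Fin.snoc x w) P = 0) →
      w = f x) := by
  constructor
  · rintro ⟨hf, p, q, hq, hrat⟩
    refine ⟨hf, ?_⟩
    have hqf : ∀ x, eval x q ≠ 0 → eval x q * f x = eval x p := fun x hx => by
      rw [hrat x hx]; field_simp
    have hall := qf_eq_p hf hq hqf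
    obtain ⟨g, hg⟩ := poly_of_rat hf q hq p hall
    intro x w h
    have key : ∀ y : Fin n → ℂ,
        eval (Fin.snoc y (f y)) (X (Fin.last n) - rename Fin.castSucc g) = 0 := by
      intro y
      rw [map_sub, eval_X, Fin.snoc_last, eval_rename]
      have hy : Fin.snoc y (f y) ∘ Fin.castSucc = y := by
        funext i
        simp [Fin.snoc_castSucc]
      rw [hy, ← hg y, sub_self]
    have hP := h (X (Fin.last n) - rename Fin.castSucc g) key
    rw [map_sub, eval_X, Fin.snoc_last, eval_rename] at hP
    have hx : Fin.snoc x w ∘ Fin.castSucc = x := by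
      funext i
      simp [Fin.snoc_castSucc]
    rw [hx, sub_eq_zero] at hP
    rw [hP, hg x]
  · rintro ⟨hf, hb⟩
    exact ⟨hf, rat_of_closed hb⟩
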